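/- arXiv:1903.08232 — 2 statements merged into one kernel-verified Lean document; each statement's English description precedes it below -/
import Mathlib

section
/- For every $n$, $e$, $r$, $s$, among all $r$-uniform hypergraphs on $n$ vertices with $e$ edges maximizing the number of $s$-independent sets, there is one that is shifted (i.e., invariant under all $(i,j)$-shifts with $j < i$). -/
/-- The `(i,j)`-shift of a single edge: replace `i` by `j` when `E ∩ {i,j} = {i}`. -/
def shiftEdge (i j : ℕ) (E : Finset ℕ) : Finset ℕ :=
  if i ∈ E ∧ j ∉ E then insert j (E.erase i) else E

/-- The `(i,j)`-shift of an edge set. -/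
def shiftSet (i j : ℕ) (H : Finset (Finset ℕ)) : Finset (Finset ℕ) :=
  H.image (shiftEdge i j) ∪ H.filter (fun E => shiftEdge i j E ∈ H)

/-- The number of `s`-independent sets of a hypergraph on `[n] = {0,…,n-1}`. -/
def indepCount (n s : ℕ) (H : Finset (Finset ℕ)) : ℕ :=
  ((Finset.range n).powerset.filter (fun I => ∀ E ∈ H, (I ∩ E).card < s)).card

open Finset

lemma shiftEdge_of_cond {i j : ℕ} {E : Finset ℕ} (h : i ∈ E ∧ j ∉ E) :
    shiftEdge i j E = insert j (E.erase i) := if_pos h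

lemma shiftEdge_of_not_cond {i j : ℕ} {E : Finset ℕ} (h : ¬(i ∈ E ∧ j ∉ E)) :
    shiftEdge i j E = E := if_neg h

lemma shiftEdge_idem (i j : ℕ) (E : Finset ℕ) :
    shiftEdge i j (shiftEdge i j E) = shiftEdge i j E := by
  by_cases h : i ∈ E ∧ j ∉ E
  · rw [shiftEdge_of_cond h, shiftEdge_of_not_cond]
    simp
  · rw [shiftEdge_of_not_cond h, shiftEdge_of_not_cond h]

lemma card_shiftEdge {i j : ℕ} (hij : i ≠ j) (E : Finset ℕ) :
    (shiftEdge i j E).card = E.card := by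
  by_cases h : i ∈ E ∧ j ∉ E
  · rw [shiftEdge_of_cond h, card_insert_of_notMem (fun hj => h.2 (mem_of_mem_erase hj)),
      card_erase_of_mem h.1]
    have : 1 ≤ E.card := card_pos.mpr ⟨i, h.1⟩
    omega
  · rw [shiftEdge_of_not_cond h]

lemma shiftEdge_subset_range {i j n : ℕ} {E : Finset ℕ} (hj : j < n)
    (hE : E ⊆ range n) : shiftEdge i j E ⊆ range n := by
  by_cases h : i ∈ E ∧ j ∉ E
  · rw [shiftEdge_of_cond h]
    intro x hx
    rcases mem_insert.mp hx with rfl | hx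
    · exact mem_range.mpr hj
    · exact hE (mem_of_mem_erase hx)
  · rw [shiftEdge_of_not_cond h]; exact hE

lemma mem_shiftSet {i j : ℕ} {H : Finset (Finset ℕ)} {E' : Finset ℕ} :
    E' ∈ shiftSet i j H ↔
      (∃ E ∈ H, shiftEdge i j E = E') ∨ (E' ∈ H ∧ shiftEdge i j E' ∈ H) := by
  simp [shiftSet, mem_union, mem_image, mem_filter]

/-- The "bad" part of `H`: edges whose shift leaves `H`. -/
def badPart (i j : ℕ) (H : Finset (Finset ℕ)) : Finset (Finset ℕ) :=
  H.filter (fun E => shiftEdge i j E ∉ H)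

/-- The "good" part of `H`: edges whose shift stays in `H`. -/
def goodPart (i j : ℕ) (H : Finset (Finset ℕ)) : Finset (Finset ℕ) :=
  H.filter (fun E => shiftEdge i j E ∈ H)

lemma badPart_cond {i j : ℕ} {H : Finset (Finset ℕ)} {E : Finset ℕ}
    (hE : E ∈ badPart i j H) : i ∈ E ∧ j ∉ E := by
  rw [badPart, mem_filter] at hE
  by_contra h
  exact hE.2 (by rw [shiftEdge_of_not_cond h]; exact hE.1)

lemma shiftSet_eq_union (i j : ℕ) (H : Finset (Finset ℕ)) :
    shiftSet i j H = goodPart i j H ∪ (badPart i j H).image (shiftEdge i j) := by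
  ext E'
  constructor
  · intro hE'
    rcases mem_shiftSet.mp hE' with ⟨E, hE, rfl⟩ | ⟨h1, h2⟩
    · by_cases hg : shiftEdge i j E ∈ H
      · apply mem_union_left
        rw [goodPart, mem_filter]
        exact ⟨hg, by rw [shiftEdge_idem]; exact hg⟩
      · apply mem_union_right
        exact mem_image_of_mem _ (by rw [badPart, mem_filter]; exact ⟨hE, hg⟩)
    · apply mem_union_left; rw [goodPart, mem_filter]; exact ⟨h1, h2⟩
  · intro hE'
    rcases mem_union.mp hE' with h | h
    · rw [goodPart, mem_filter] at h
      exact mem_shiftSet.mpr (Or.inr h)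
    · rcases mem_image.mp h with ⟨E, hE, rfl⟩
      rw [badPart, mem_filter] at hE
      exact mem_shiftSet.mpr (Or.inl ⟨E, hE.1, rfl⟩)

lemma disjoint_good_bad_image (i j : ℕ) (H : Finset (Finset ℕ)) :
    Disjoint (goodPart i j H) ((badPart i j H).image (shiftEdge i j)) := by
  rw [disjoint_left]
  intro E' h1 h2
  rcases mem_image.mp h2 with ⟨E, hE, rfl⟩
  rw [badPart, mem_filter] at hE
  rw [goodPart, mem_filter] at h1
  exact hE.2 h1.1

lemma injOn_shiftEdge_bad {i j : ℕ} (hij : i ≠ j) (H : Finset (Finset ℕ)) :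
    Set.InjOn (shiftEdge i j) (badPart i j H) := by
  intro E1 h1 E2 h2 heq
  have c1 := badPart_cond h1
  have c2 := badPart_cond h2
  rw [shiftEdge_of_cond c1, shiftEdge_of_cond c2] at heq
  have key : ∀ E : Finset ℕ, i ∈ E → j ∉ E →
      insert i ((insert j (E.erase i)).erase j) = E := by
    intro E hi hj
    rw [erase_insert (fun hj' => hj (mem_of_mem_erase hj')), insert_erase hi]
  calc E1 = insert i ((insert j (E1.erase i)).erase j) := (key E1 c1.1 c1.2).symm
    _ = insert i ((insert j (E2.erase i)).erase j) := by rw [heq]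
    _ = E2 := key E2 c2.1 c2.2

lemma card_shiftSet {i j : ℕ} (hij : i ≠ j) (H : Finset (Finset ℕ)) :
    (shiftSet i j H).card = H.card := by
  rw [shiftSet_eq_union, card_union_of_disjoint (disjoint_good_bad_image i j H),
    card_image_of_injOn (injOn_shiftEdge_bad hij H), goodPart, badPart,
    card_filter_add_card_filter_not]

lemma shiftSet_subset_powersetCard {i j n r : ℕ} (hj : j < n) (hij : i ≠ j)
    {H : Finset (Finset ℕ)} (hH : H ⊆ (range n).powersetCard r) :
    shiftSet i j H ⊆ (range n).powersetCard r := by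
  intro E' hE'
  rcases mem_shiftSet.mp hE' with ⟨E, hE, rfl⟩ | ⟨h1, _⟩
  · have := mem_powersetCard.mp (hH hE)
    exact mem_powersetCard.mpr
      ⟨shiftEdge_subset_range hj this.1, (card_shiftEdge hij E).trans this.2⟩
  · exact hH h1

lemma shiftSet_eq_of_bad_empty {i j : ℕ} {H : Finset (Finset ℕ)}
    (h : badPart i j H = ∅) : shiftSet i j H = H := by
  rw [shiftSet_eq_union, h, image_empty, union_empty, goodPart]
  apply filter_true_of_mem
  intro E hE
  by_contra hc
  have : E ∈ badPart i j H := by rw [badPart, mem_filter]; exact ⟨hE, hc⟩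
  simp [h] at this

/-- total weight of a hypergraph -/
def hgWeight (H : Finset (Finset ℕ)) : ℕ := ∑ E ∈ H, ∑ x ∈ E, x

lemma hgWeight_shiftSet_lt {i j : ℕ} (hij : j < i) {H : Finset (Finset ℕ)}
    (hne : shiftSet i j H ≠ H) : hgWeight (shiftSet i j H) < hgWeight H := by
  have hB : (badPart i j H).Nonempty := by
    rcases eq_empty_or_nonempty (badPart i j H) with h | h
    · exact absurd (shiftSet_eq_of_bad_empty h) hne
    · exact h
  have hsplit : hgWeight H = (∑ E ∈ goodPart i j H, ∑ x ∈ E, x)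
      + ∑ E ∈ badPart i j H, ∑ x ∈ E, x := by
    rw [hgWeight, ← sum_filter_add_sum_filter_not H (fun E => shiftEdge i j E ∈ H)]
    rfl
  rw [hgWeight, shiftSet_eq_union,
    sum_union (disjoint_good_bad_image i j H),
    sum_image (injOn_shiftEdge_bad hij.ne' H), hsplit]
  apply Nat.add_lt_add_left
  apply sum_lt_sum_of_nonempty hB
  intro E hE
  have c := badPart_cond hE
  rw [shiftEdge_of_cond c, sum_insert (fun hj' => c.2 (mem_of_mem_erase hj'))]
  have herase : (∑ x ∈ E.erase i, x) + i = ∑ x ∈ E, x := sum_erase_add E _ c.1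
  omega

/-- Independence predicate. -/
def isIndep (s : ℕ) (H : Finset (Finset ℕ)) (I : Finset ℕ) : Prop :=
  ∀ E ∈ H, (I ∩ E).card < s

instance (s : ℕ) (H : Finset (Finset ℕ)) (I : Finset ℕ) :
    Decidable (isIndep s H I) := by unfold isIndep; infer_instance

-- intersection cardinality computations
lemma card_inter_swap_in {i j : ℕ} {I E : Finset ℕ} (hij : i ≠ j) (hiI : i ∉ I)
    (hjI : j ∈ I) (hiE : i ∈ E) (hjE : j ∉ E) :
    ((insert i (I.erase j)) ∩ E).card = (I ∩ E).card + 1 := by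
  rw [insert_inter_of_mem hiE, erase_inter,
    erase_eq_of_notMem (fun h => hjE (mem_inter.mp h).2),
    card_insert_of_notMem (fun h => hiI (mem_inter.mp h).1)]

lemma card_inter_shiftEdge_swap {i j : ℕ} {I E : Finset ℕ} (hij : i ≠ j)
    (hiI : i ∉ I) (hjI : j ∈ I) (hiE : i ∈ E) (hjE : j ∉ E) :
    (I ∩ insert j (E.erase i)).card = (I ∩ E).card + 1 := by
  rw [inter_comm, insert_inter_of_mem hjI, erase_inter, inter_comm,
    erase_eq_of_notMem (fun h => hiI (mem_inter.mp h).1),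
    card_insert_of_notMem (fun h => hjE (mem_inter.mp h).2)]

/-- Key preservation: if `I` is independent in `H` then its swap is independent
in the shift, case (A). -/
lemma indep_swap_shift {i j s : ℕ} (hij : i ≠ j) {H : Finset (Finset ℕ)}
    {I : Finset ℕ} (hI : isIndep s H I) (hiI : i ∉ I) (hjI : j ∈ I) :
    isIndep s (shiftSet i j H) (insert i (I.erase j)) := by
  intro E' hE'
  rcases mem_shiftSet.mp hE' with ⟨E, hE, rfl⟩ | ⟨h1, h2⟩
  · by_cases hc : i ∈ E ∧ j ∉ E
    · -- E' = insert j (E.erase i), i ∉ E', j ∈ E'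
      rw [shiftEdge_of_cond hc]
      have hiE' : i ∉ insert j (E.erase i) := by
        simp [hij, notMem_erase]
      have hjE' : j ∈ insert j (E.erase i) := mem_insert_self _ _
      -- (I' ∩ E').card = (I ∩ E').card - 1 and (I ∩ E') = (I ∩ E) + 1
      have h1 : ((insert i (I.erase j)) ∩ insert j (E.erase i)).card
          = ((I.erase j) ∩ insert j (E.erase i)).card := by
        rw [insert_inter_of_notMem hiE']
      have h2 : ((I.erase j) ∩ insert j (E.erase i)).card
          = ((I ∩ insert j (E.erase i)).erase j).card := by rw [erase_inter]
      have h3 : (I ∩ insert j (E.erase i)).card = (I ∩ E).card + 1 :=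
        card_inter_shiftEdge_swap hij hiI hjI hc.1 hc.2
      have h4 := card_erase_le (s := I ∩ insert j (E.erase i)) (a := j)
      have h5 : ((I ∩ insert j (E.erase i)).erase j).card
          = (I ∩ insert j (E.erase i)).card - 1 :=
        card_erase_of_mem (mem_inter.mpr ⟨hjI, hjE'⟩)
      have := hI E hE
      omega
    · -- shiftEdge fixes E, E ∈ H; reduce to the filter case below
      rw [shiftEdge_of_not_cond hc]
      by_cases hiE : i ∈ E
      · have hjE : j ∈ E := by tauto
        -- (I' ∩ E).card = (I ∩ E).card
        have : ((insert i (I.erase j)) ∩ E).card = (I ∩ E).card := by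
          rw [insert_inter_of_mem hiE, erase_inter,
            card_insert_of_notMem (by simp [hiI]),
            card_erase_of_mem (mem_inter.mpr ⟨hjI, hjE⟩)]
          have : 1 ≤ (I ∩ E).card := card_pos.mpr ⟨j, mem_inter.mpr ⟨hjI, hjE⟩⟩
          omega
        rw [this]; exact hI E hE
      · have : ((insert i (I.erase j)) ∩ E).card ≤ (I ∩ E).card := by
          rw [insert_inter_of_notMem hiE, erase_inter]
          exact le_trans (card_erase_le) (le_refl _)
        exact lt_of_le_of_lt this (hI E hE)
  · -- E' ∈ H and shiftEdge i j E' ∈ H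
    by_cases hc : i ∈ E' ∧ j ∉ E'
    · have hkey : ((insert i (I.erase j)) ∩ E').card = (I ∩ E').card + 1 :=
        card_inter_swap_in hij hiI hjI hc.1 hc.2
      have hwit : (I ∩ shiftEdge i j E').card < s := hI _ h2
      rw [shiftEdge_of_cond hc] at hwit
      have : (I ∩ insert j (E'.erase i)).card = (I ∩ E').card + 1 :=
        card_inter_shiftEdge_swap hij hiI hjI hc.1 hc.2
      omega
    · by_cases hiE : i ∈ E'
      · have hjE : j ∈ E' := by tauto
        have : ((insert i (I.erase j)) ∩ E').card = (I ∩ E').card := by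
          rw [insert_inter_of_mem hiE, erase_inter,
            card_insert_of_notMem (by simp [hiI]),
            card_erase_of_mem (mem_inter.mpr ⟨hjI, hjE⟩)]
          have : 1 ≤ (I ∩ E').card := card_pos.mpr ⟨j, mem_inter.mpr ⟨hjI, hjE⟩⟩
          omega
        rw [this]; exact hI E' h1
      · have : ((insert i (I.erase j)) ∩ E').card ≤ (I ∩ E').card := by
          rw [insert_inter_of_notMem hiE, erase_inter]
          exact card_erase_le
        exact lt_of_le_of_lt this (hI E' h1)

/-- Case (B): `I` itself stays independent in the shifted family. -/
lemma indep_self_shift {i j s : ℕ} (hij : i ≠ j) {H : Finset (Finset ℕ)}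
    {I : Finset ℕ} (hI : isIndep s H I)
    (hextra : i ∈ I ∨ j ∉ I ∨ isIndep s H (insert i (I.erase j))) :
    isIndep s (shiftSet i j H) I := by
  intro E' hE'
  rcases mem_shiftSet.mp hE' with ⟨E, hE, rfl⟩ | ⟨h1, _⟩
  · by_cases hc : i ∈ E ∧ j ∉ E
    · rw [shiftEdge_of_cond hc]
      by_cases hjI : j ∈ I
      · by_cases hiI : i ∈ I
        · -- both in I: count unchanged
          have : (I ∩ insert j (E.erase i)).card = (I ∩ E).card := by
            rw [inter_comm, insert_inter_of_mem hjI, erase_inter, inter_comm,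
              card_insert_of_notMem (by simp [hc.2]),
              card_erase_of_mem (mem_inter.mpr ⟨hiI, hc.1⟩)]
            have : 1 ≤ (I ∩ E).card := card_pos.mpr ⟨i, mem_inter.mpr ⟨hiI, hc.1⟩⟩
            omega
          rw [this]; exact hI E hE
        · -- i ∉ I, j ∈ I : need the extra hypothesis
          have hswap : isIndep s H (insert i (I.erase j)) := by tauto
          have h1 : ((insert i (I.erase j)) ∩ E).card = (I ∩ E).card + 1 :=
            card_inter_swap_in hij hiI hjI hc.1 hc.2
          have h2 : (I ∩ insert j (E.erase i)).card = (I ∩ E).card + 1 :=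
            card_inter_shiftEdge_swap hij hiI hjI hc.1 hc.2
          have := hswap E hE
          omega
      · have : (I ∩ insert j (E.erase i)).card ≤ (I ∩ E).card := by
          rw [inter_comm, insert_inter_of_notMem hjI, erase_inter, inter_comm]
          exact card_erase_le
        exact lt_of_le_of_lt this (hI E hE)
    · rw [shiftEdge_of_not_cond hc]; exact hI E hE
  · exact hI E' h1

/-- Shifting does not decrease the number of independent sets. -/
lemma indepCount_le_shiftSet {i j n s : ℕ} (hij : i ≠ j) (hin : i < n)
    (H : Finset (Finset ℕ)) :
    indepCount n s H ≤ indepCount n s (shiftSet i j H) := by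
  classical
  unfold indepCount
  apply card_le_card_of_injOn
    (fun I => if i ∉ I ∧ j ∈ I ∧ ¬ isIndep s H (insert i (I.erase j))
              then insert i (I.erase j) else I)
  · -- maps into target
    intro I hI
    rw [mem_coe] at hI ⊢; beta_reduce
    rw [mem_filter, mem_powerset] at hI
    obtain ⟨hIsub, hIind⟩ := hI
    by_cases hc : i ∉ I ∧ j ∈ I ∧ ¬ isIndep s H (insert i (I.erase j))
    · rw [if_pos hc, mem_filter, mem_powerset]
      constructor
      · intro x hx
        rcases mem_insert.mp hx with rfl | hx
        · exact mem_range.mpr hin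
        · exact hIsub (mem_of_mem_erase hx)
      · exact indep_swap_shift hij hIind hc.1 hc.2.1
    · rw [if_neg hc, mem_filter, mem_powerset]
      refine ⟨hIsub, indep_self_shift hij hIind ?_⟩
      push_neg at hc
      by_cases hiI : i ∈ I
      · exact Or.inl hiI
      · by_cases hjI : j ∈ I
        · exact Or.inr (Or.inr (hc hiI hjI))
        · exact Or.inr (Or.inl hjI)
  · -- injective
    intro I1 h1 I2 h2 heq
    rw [mem_coe, mem_filter, mem_powerset] at h1 h2
    simp only at heq
    by_cases c1 : i ∉ I1 ∧ j ∈ I1 ∧ ¬ isIndep s H (insert i (I1.erase j)) <;>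
    by_cases c2 : i ∉ I2 ∧ j ∈ I2 ∧ ¬ isIndep s H (insert i (I2.erase j))
    · rw [if_pos c1, if_pos c2] at heq
      have key : ∀ I : Finset ℕ, i ∉ I → j ∈ I →
          insert j ((insert i (I.erase j)).erase i) = I := by
        intro I hi hj
        rw [erase_insert (fun h => hi (mem_of_mem_erase h)), insert_erase hj]
      calc I1 = insert j ((insert i (I1.erase j)).erase i) := (key I1 c1.1 c1.2.1).symm
        _ = insert j ((insert i (I2.erase j)).erase i) := by rw [heq]
        _ = I2 := key I2 c2.1 c2.2.1
    · rw [if_pos c1, if_neg c2] at heq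
      exact absurd (heq ▸ h2.2 : isIndep s H (insert i (I1.erase j))) c1.2.2
    · rw [if_neg c1, if_pos c2] at heq
      exact absurd (heq ▸ h1.2 : isIndep s H (insert i (I2.erase j))) c2.2.2
    · rw [if_neg c1, if_neg c2] at heq
      exact heq

theorem exists_shifted_maximizer (n r s e : ℕ) (he : e ≤ n.choose r) :
    ∃ H : Finset (Finset ℕ), H ⊆ (Finset.range n).powersetCard r ∧ H.card = e ∧
      (∀ i j : ℕ, j < i → i < n → shiftSet i j H = H) ∧
      ∀ G : Finset (Finset ℕ), G ⊆ (Finset.range n).powersetCard r → G.card = e →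
        indepCount n s G ≤ indepCount n s H := by
  classical
  set P := ((range n).powersetCard r).powerset.filter (fun H => H.card = e) with hP
  have hmemP : ∀ H : Finset (Finset ℕ),
      H ∈ P ↔ (H ⊆ (range n).powersetCard r ∧ H.card = e) := by
    intro H; rw [hP, mem_filter, mem_powerset]
  have hPne : P.Nonempty := by
    obtain ⟨H₀, hsub, hcard⟩ := exists_subset_card_eq
      (s := (range n).powersetCard r) (n := e)
      (by rw [card_powersetCard, card_range]; exact he)
    exact ⟨H₀, (hmemP H₀).mpr ⟨hsub, hcard⟩⟩
  obtain ⟨M, hM, hMmax⟩ := P.exists_max_image (indepCount n s) hPne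
  set Q := P.filter (fun H => indepCount n s M ≤ indepCount n s H) with hQ
  have hQne : Q.Nonempty := ⟨M, by rw [hQ, mem_filter]; exact ⟨hM, le_refl _⟩⟩
  obtain ⟨H, hHQ, hHmin⟩ := Q.exists_min_image hgWeight hQne
  rw [hQ, mem_filter] at hHQ
  obtain ⟨hHP, hHge⟩ := hHQ
  obtain ⟨hHsub, hHcard⟩ := (hmemP H).mp hHP
  refine ⟨H, hHsub, hHcard, ?_, ?_⟩
  · intro i j hji hin
    by_contra hne
    set H' := shiftSet i j H with hH'
    have hH'P : H' ∈ P := (hmemP H').mpr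
      ⟨shiftSet_subset_powersetCard (lt_trans hji hin) hji.ne' hHsub,
       (card_shiftSet hji.ne' H).trans hHcard⟩
    have hle : indepCount n s H ≤ indepCount n s H' :=
      indepCount_le_shiftSet hji.ne' hin H
    have hH'Q : H' ∈ Q := by
      rw [hQ, mem_filter]
      exact ⟨hH'P, le_trans hHge hle⟩
    have hmin := hHmin H' hH'Q
    have hlt := hgWeight_shiftSet_lt hji hne
    rw [← hH'] at hlt
    omega
  · intro G hGsub hGcard
    exact le_trans (hMmax G ((hmemP G).mpr ⟨hGsub, hGcard⟩)) hHge
end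

section
/- Let $\mathcal{H}$ and $\mathcal{H}' = \mathcal{H} + E$ be shifted $r$-graphs (differing in the single edge $E$), and let $I \subseteq [n]$ with $|I| \ge s$. Then $I$ is $s$-independent in $\mathcal{H}$ but not in $\mathcal{H}'$ if and only if $E_0(I) = E$. -/
/-- The set of the `s` smallest elements of `I`. -/
def sSmallest (s : ℕ) (I : Finset ℕ) : Finset ℕ := ((I.sort (· ≤ ·)).take s).toFinset

/-- The minimal edge `E₀(I)`: the `s` smallest elements of `I` together with the
`r - s` smallest elements of `[n]` outside of them. -/
def minimalEdge (n r s : ℕ) (I : Finset ℕ) : Finset ℕ :=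
  sSmallest s I ∪ sSmallest (r - s) (Finset.range n \ sSmallest s I)

lemma sSmallest_subset (s : ℕ) (I : Finset ℕ) : sSmallest s I ⊆ I := by
  intro x hx
  simp only [sSmallest, List.mem_toFinset] at hx
  exact (Finset.mem_sort _).1 ((List.take_sublist _ _).mem hx)

lemma sSmallest_card {s : ℕ} {I : Finset ℕ} (h : s ≤ I.card) : (sSmallest s I).card = s := by
  have hnd : ((I.sort (· ≤ ·)).take s).Nodup := (List.take_sublist _ _).nodup (I.sort_nodup _)
  rw [sSmallest, List.card_toFinset, hnd.dedup, List.length_take, Finset.length_sort]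
  omega

lemma sSmallest_lt {s : ℕ} {I : Finset ℕ} {a x : ℕ} (ha : a ∈ sSmallest s I)
    (hx : x ∈ I) (hxs : x ∉ sSmallest s I) : a < x := by
  have ha' : a ∈ (I.sort (· ≤ ·)).take s := by simpa [sSmallest] using ha
  have hx' : x ∉ (I.sort (· ≤ ·)).take s := by simpa [sSmallest] using hxs
  have hxl : x ∈ I.sort (· ≤ ·) := (Finset.mem_sort _).2 hx
  rw [← List.take_append_drop s (I.sort (· ≤ ·))] at hxl
  have hxd : x ∈ (I.sort (· ≤ ·)).drop s := (List.mem_append.1 hxl).resolve_left hx'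
  have hp : (I.sort (· ≤ ·)).Pairwise (· ≤ ·) := I.pairwise_sort _
  rw [← List.take_append_drop s (I.sort (· ≤ ·)), List.pairwise_append] at hp
  have hle : a ≤ x := hp.2.2 a ha' x hxd
  rcases eq_or_lt_of_le hle with h | h
  · exact absurd (h ▸ ha') hx'
  · exact h



lemma Finset.inter_union_sdiff_eq (s t : Finset ℕ) : t ∩ s ∪ s \ t = s := by
  ext x; simp [Finset.mem_union, Finset.mem_inter, Finset.mem_sdiff]; tauto

def domBy (F G : Finset ℕ) : Prop :=
  ∀ t, (G.filter (· < t)).card ≤ (F.filter (· < t)).card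

lemma mem_of_domBy (H : Finset (Finset ℕ)) (n : ℕ)
    (hcl : ∀ i j : ℕ, j < i → i < n → ∀ G ∈ H, shiftEdge i j G ∈ H) :
    ∀ m G F, G.sum id = m → G ∈ H → G ⊆ Finset.range n → F ⊆ Finset.range n →
      F.card = G.card → domBy F G → F ∈ H := by
  intro m
  induction m using Nat.strong_induction_on with
  | _ m ih =>
    intro G F hm hG hGn hFn hcard hdom
    by_cases hFG : F = G
    · exact hFG ▸ hG
    -- F ≠ G : find a shift step
    have hGF : (G \ F).Nonempty := by
      rw [Finset.sdiff_nonempty]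
      intro hsub
      exact hFG (Finset.eq_of_subset_of_card_le hsub (le_of_eq hcard)).symm
    set i := (G \ F).min' hGF with hi
    have hiGF : i ∈ G \ F := (G \ F).min'_mem hGF
    have hiG : i ∈ G := (Finset.mem_sdiff.1 hiGF).1
    have hiF : i ∉ F := (Finset.mem_sdiff.1 hiGF).2
    have hin : i < n := Finset.mem_range.1 (hGn hiG)
    -- find j ∈ F \ G with j < i
    have hcnt := hdom (i + 1)
    have hsplitG : (G.filter (· < i + 1)).card
        = ((G ∩ F).filter (· < i + 1)).card + ((G \ F).filter (· < i + 1)).card := by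
      rw [← Finset.card_union_of_disjoint, ← Finset.filter_union, Finset.inter_comm,
        Finset.inter_union_sdiff_eq G F]
      exact Finset.disjoint_filter_filter (Finset.disjoint_sdiff_inter G F).symm
    have hsplitF : (F.filter (· < i + 1)).card
        = ((F ∩ G).filter (· < i + 1)).card + ((F \ G).filter (· < i + 1)).card := by
      rw [← Finset.card_union_of_disjoint, ← Finset.filter_union, Finset.inter_comm,
        Finset.inter_union_sdiff_eq F G]
      exact Finset.disjoint_filter_filter (Finset.disjoint_sdiff_inter F G).symm
    have hiin : i ∈ (G \ F).filter (· < i + 1) := by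
      simp [hiGF]
    have hFGne : ((F \ G).filter (· < i + 1)).Nonempty := by
      rw [← Finset.card_pos]
      have h1 : 1 ≤ ((G \ F).filter (· < i + 1)).card := Finset.card_pos.2 ⟨i, hiin⟩
      rw [Finset.inter_comm F G] at hsplitF
      omega
    obtain ⟨j, hj⟩ := hFGne
    simp only [Finset.mem_filter, Finset.mem_sdiff] at hj
    obtain ⟨⟨hjF, hjG⟩, hjlt⟩ := hj
    have hji : j < i := lt_of_le_of_ne (by omega) (fun h => hiF (h ▸ hjF))
    -- the shifted edge
    set G' := insert j (G.erase i) with hG'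
    have hsh : shiftEdge i j G = G' := by
      rw [shiftEdge, if_pos ⟨hiG, hjG⟩]
    have hG'H : G' ∈ H := hsh ▸ hcl i j hji hin G hG
    have hjerase : j ∉ G.erase i := fun h => hjG (Finset.mem_of_mem_erase h)
    have hG'card : G'.card = G.card := by
      rw [hG', Finset.card_insert_of_notMem hjerase, Finset.card_erase_of_mem hiG]
      have : 1 ≤ G.card := Finset.card_pos.2 ⟨i, hiG⟩
      omega
    have hG'n : G' ⊆ Finset.range n := by
      intro x hx
      rcases Finset.mem_insert.1 hx with h | h
      · exact Finset.mem_range.2 (h ▸ lt_trans hji hin)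
      · exact hGn (Finset.mem_of_mem_erase h)
    have hsumlt : G'.sum id < G.sum id := by
      have h1 : G.sum id = i + (G.erase i).sum id := (Finset.add_sum_erase _ id hiG).symm
      have h2 : G'.sum id = j + (G.erase i).sum id := Finset.sum_insert hjerase
      omega
    -- domBy F G'
    have hdom' : domBy F G' := by
      intro t
      have hfilt : G'.filter (· < t) =
          if j < t then insert j ((G.filter (· < t)).erase i) else (G.filter (· < t)).erase i := by
        rw [hG', Finset.filter_insert, Finset.filter_erase]
      by_cases hjt : j < t
      · rw [hfilt, if_pos hjt]
        by_cases hit : i < t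
        · -- t > i : card equal to G.filter
          have hiflt : i ∈ G.filter (· < t) := Finset.mem_filter.2 ⟨hiG, hit⟩
          have hjnot : j ∉ (G.filter (· < t)).erase i := by
            intro h
            exact hjG (Finset.mem_filter.1 (Finset.mem_of_mem_erase h)).1
          rw [Finset.card_insert_of_notMem hjnot, Finset.card_erase_of_mem hiflt]
          have h1 : 1 ≤ (G.filter (· < t)).card := Finset.card_pos.2 ⟨i, hiflt⟩
          have := hdom t
          omega
        · -- j < t ≤ i : insert j into G.filter; show ⊆ F.filter
          have herase : (G.filter (· < t)).erase i = G.filter (· < t) :=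
            Finset.erase_eq_of_notMem (fun h => hit (Finset.mem_filter.1 h).2)
          rw [herase]
          have hsub : insert j (G.filter (· < t)) ⊆ F.filter (· < t) := by
            intro x hx
            rcases Finset.mem_insert.1 hx with h | h
            · exact Finset.mem_filter.2 ⟨h ▸ hjF, h ▸ hjt⟩
            · obtain ⟨hxG, hxt⟩ := Finset.mem_filter.1 h
              refine Finset.mem_filter.2 ⟨?_, hxt⟩
              by_contra hxF
              have : i ≤ x := (G \ F).min'_le x (Finset.mem_sdiff.2 ⟨hxG, hxF⟩)
              omega
          exact Finset.card_le_card hsub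
      · rw [hfilt, if_neg hjt]
        calc ((G.filter (· < t)).erase i).card ≤ (G.filter (· < t)).card :=
              Finset.card_le_card (Finset.erase_subset _ _)
          _ ≤ _ := hdom t
    exact ih (G'.sum id) (hm ▸ hsumlt) G' F rfl hG'H hG'n hFn (hcard.trans hG'card.symm) hdom'

section MinEdge
variable {n r s : ℕ} {I : Finset ℕ}

lemma minEdge_disj (hI : I ⊆ Finset.range n) (hIs : s ≤ I.card) :
    Disjoint (sSmallest s I) (sSmallest (r - s) (Finset.range n \ sSmallest s I)) := by
  refine Finset.disjoint_left.2 fun x hx hx' => ?_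
  exact (Finset.mem_sdiff.1 (sSmallest_subset _ _ hx')).2 hx

lemma minEdge_subset (hI : I ⊆ Finset.range n) : minimalEdge n r s I ⊆ Finset.range n := by
  intro x hx
  rcases Finset.mem_union.1 hx with h | h
  · exact hI (sSmallest_subset _ _ h)
  · exact (Finset.mem_sdiff.1 (sSmallest_subset _ _ h)).1

lemma minEdge_card (hrn : r ≤ n) (hsr : s ≤ r) (hI : I ⊆ Finset.range n) (hIs : s ≤ I.card) :
    (minimalEdge n r s I).card = r := by
  have hA : (sSmallest s I).card = s := sSmallest_card hIs
  have hBcard : (Finset.range n \ sSmallest s I).card = n - s := by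
    rw [Finset.card_sdiff_of_subset (fun x hx => hI (sSmallest_subset _ _ hx)), Finset.card_range, hA]
  have hB : (sSmallest (r - s) (Finset.range n \ sSmallest s I)).card = r - s :=
    sSmallest_card (by omega)
  rw [minimalEdge, Finset.card_union_of_disjoint (minEdge_disj hI hIs), hA, hB]
  omega

lemma minEdge_inter (hIs : s ≤ I.card) : s ≤ (I ∩ minimalEdge n r s I).card := by
  have h : sSmallest s I ⊆ I ∩ minimalEdge n r s I := by
    intro x hx
    exact Finset.mem_inter.2 ⟨sSmallest_subset _ _ hx, Finset.mem_union_left _ hx⟩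
  calc s = (sSmallest s I).card := (sSmallest_card hIs).symm
    _ ≤ _ := Finset.card_le_card h

lemma minEdge_domBy (hrn : r ≤ n) (hsr : s ≤ r) (hI : I ⊆ Finset.range n) (hIs : s ≤ I.card)
    {G : Finset ℕ} (hGn : G ⊆ Finset.range n) (hGr : G.card = r)
    (hGI : s ≤ (I ∩ G).card) : domBy (minimalEdge n r s I) G := by
  intro t
  set A := sSmallest s I with hA
  set B := sSmallest (r - s) (Finset.range n \ A) with hB
  have hAcard : A.card = s := sSmallest_card hIs
  have hBcard : B.card = r - s := by
    refine sSmallest_card ?_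
    rw [Finset.card_sdiff_of_subset (fun x hx => hI (sSmallest_subset _ _ hx)), Finset.card_range, hAcard]
    omega
  by_cases hBt : ∀ b ∈ B, b < t
  · -- B fully below t
    have hEfilter : ((minimalEdge n r s I).filter (· < t)).card
        = (A.filter (· < t)).card + (r - s) := by
      rw [minimalEdge, Finset.filter_union, Finset.card_union_of_disjoint, ← hB]
      · congr 1
        rw [← hBcard]
        congr 1
        exact Finset.filter_true_of_mem hBt
      · exact Finset.disjoint_filter_filter (minEdge_disj hI hIs)
    rw [hEfilter]
    by_cases hAt : ∀ a ∈ A, a < t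
    · -- A fully below t too : total is r
      have : (A.filter (· < t)).card = s := by
        rw [Finset.filter_true_of_mem hAt, hAcard]
      rw [this]
      calc (G.filter (· < t)).card ≤ G.card := Finset.card_le_card (Finset.filter_subset _ _)
        _ = r := hGr
        _ ≤ s + (r - s) := by omega
    · push_neg at hAt
      obtain ⟨a, haA, hat⟩ := hAt
      -- I ∩ [0,t) ⊆ A
      have hIA : I.filter (· < t) ⊆ A := by
        intro x hx
        obtain ⟨hxI, hxt⟩ := Finset.mem_filter.1 hx
        by_contra hxA
        have := sSmallest_lt haA hxI hxA
        omega
      have h1 : (I ∩ G).filter (· < t) ⊆ A.filter (· < t) := by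
        intro x hx
        obtain ⟨hxIG, hxt⟩ := Finset.mem_filter.1 hx
        exact Finset.mem_filter.2
          ⟨hIA (Finset.mem_filter.2 ⟨(Finset.mem_inter.1 hxIG).1, hxt⟩), hxt⟩
      have h2 : ((I ∩ G).filter (· < t)).card ≤ (A.filter (· < t)).card :=
        Finset.card_le_card h1
      have h3 : ((I ∩ G).filter (· < t)).card + ((I ∩ G).filter (fun x => ¬ x < t)).card
          = (I ∩ G).card := Finset.card_filter_add_card_filter_not _
      have h4 : (G.filter (· < t)).card + (G.filter (fun x => ¬ x < t)).card = G.card :=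
        Finset.card_filter_add_card_filter_not _
      have h5 : ((I ∩ G).filter (fun x => ¬ x < t)).card ≤ (G.filter (fun x => ¬ x < t)).card :=
        Finset.card_le_card (fun x hx => Finset.mem_filter.2
          ⟨(Finset.mem_inter.1 (Finset.mem_filter.1 hx).1).2, (Finset.mem_filter.1 hx).2⟩)
      omega
  · -- some b ∈ B with t ≤ b : G ∩ [0,t) ⊆ E₀
    push_neg at hBt
    obtain ⟨b, hbB, hbt⟩ := hBt
    refine Finset.card_le_card fun x hx => ?_
    obtain ⟨hxG, hxt⟩ := Finset.mem_filter.1 hx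
    refine Finset.mem_filter.2 ⟨?_, hxt⟩
    by_cases hxA : x ∈ A
    · exact Finset.mem_union_left _ hxA
    · refine Finset.mem_union_right _ ?_
      by_contra hxB
      have := sSmallest_lt hbB (Finset.mem_sdiff.2 ⟨hGn hxG, hxA⟩) hxB
      omega
end MinEdge

theorem lost_indep_sets_iff_minimalEdge (n r s : ℕ) (hs2 : 2 ≤ s) (hsr : s ≤ r)
    (H : Finset (Finset ℕ)) (E : Finset ℕ) (hEH : E ∉ H)
    (hunif : ∀ F ∈ insert E H, F ⊆ Finset.range n ∧ F.card = r)
    (hshH : ∀ i j : ℕ, j < i → i < n → shiftSet i j H = H)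
    (hshH' : ∀ i j : ℕ, j < i → i < n → shiftSet i j (insert E H) = insert E H)
    (I : Finset ℕ) (hI : I ⊆ Finset.range n) (hIs : s ≤ I.card) :
    ((∀ F ∈ H, (I ∩ F).card < s) ∧ ¬ (∀ F ∈ insert E H, (I ∩ F).card < s)) ↔
      minimalEdge n r s I = E := by
  obtain ⟨hEn, hEr⟩ := hunif E (Finset.mem_insert_self E H)
  have hrn : r ≤ n := by
    have := Finset.card_le_card hEn
    rw [hEr, Finset.card_range] at this
    exact this
  have hclH : ∀ i j : ℕ, j < i → i < n → ∀ G ∈ H, shiftEdge i j G ∈ H := by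
    intro i j hji hin G hG
    rw [← hshH i j hji hin]
    exact Finset.mem_union_left _ (Finset.mem_image_of_mem _ hG)
  have hclH' : ∀ i j : ℕ, j < i → i < n → ∀ G ∈ insert E H, shiftEdge i j G ∈ insert E H := by
    intro i j hji hin G hG
    rw [← hshH' i j hji hin]
    exact Finset.mem_union_left _ (Finset.mem_image_of_mem _ hG)
  constructor
  · rintro ⟨hind, hnind⟩
    push_neg at hnind
    obtain ⟨F, hF, hsF⟩ := hnind
    rcases Finset.mem_insert.1 hF with rfl | hFH
    · have hdom := minEdge_domBy hrn hsr hI hIs hEn hEr hsF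
      have hmem : minimalEdge n r s I ∈ insert F H :=
        mem_of_domBy (insert F H) n hclH' (F.sum id) F (minimalEdge n r s I) rfl
          (Finset.mem_insert_self F H) hEn (minEdge_subset hI)
          (by rw [minEdge_card hrn hsr hI hIs, hEr]) hdom
      rcases Finset.mem_insert.1 hmem with h | h
      · exact h
      · exact absurd (hind _ h) (not_lt.2 (minEdge_inter hIs))
    · exact absurd (hind F hFH) (not_lt.2 hsF)
  · intro hmin
    constructor
    · intro F hFH
      by_contra hge
      push_neg at hge
      obtain ⟨hFn, hFr⟩ := hunif F (Finset.mem_insert_of_mem hFH)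
      have hdom := minEdge_domBy hrn hsr hI hIs hFn hFr hge
      have hmem : minimalEdge n r s I ∈ H :=
        mem_of_domBy H n hclH (F.sum id) F (minimalEdge n r s I) rfl hFH hFn
          (minEdge_subset hI) (by rw [minEdge_card hrn hsr hI hIs, hFr]) hdom
      exact hEH (hmin ▸ hmem)
    · intro hall
      have h1 := hall E (Finset.mem_insert_self E H)
      have h2 : s ≤ (I ∩ E).card := hmin ▸ minEdge_inter hIs
      omega
end
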